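/- arXiv:1302.4151 — 3 statements merged into one kernel-verified Lean document; each statement's English description precedes it below -/
import Mathlib

section
/- Let φ : (R,m) → (S,n) be a flat local homomorphism of commutative Noetherian local rings such that the induced map R/m → S/mS is an isomorphism, and let M and N be finitely generated R-modules. Then the tensor product M ⊗_R N has an S-module structure compatible with its R-module structure via φ if and only if for every prime ideal p ∈ Supp_R(M) ∩ Supp_R(N), the induced ring map R/p → S/pS is an isomorphism. -/
universe u

open CategoryTheory TensorProduct

/-- An `R`-module `L` has an `S`-module structure compatible with its `R`-module structure
via `algebraMap R S` if there is an `S`-scalar multiplication making `L` an `S`-module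
such that `algebraMap R S r • x = r • x` for all `r : R`, `x : L`. -/
def HasCompatibleSModule (R S L : Type*) [CommRing R] [CommRing S] [Algebra R S]
    [AddCommGroup L] [Module R L] : Prop :=
  ∃ inst : Module S L, ∀ (r : R) (x : L), (letI := inst; (algebraMap R S r) • x) = r • x

section Aux

variable (R S : Type u) [CommRing R] [CommRing S] [Algebra R S]

/-- The natural map `L → S ⊗[R] L`. -/
noncomputable def lamSMod (L : Type u) [AddCommGroup L] [Module R L] : L →ₗ[R] S ⊗[R] L :=
  TensorProduct.mk R S L 1

lemma lamSMod_apply (L : Type u) [AddCommGroup L] [Module R L] (x : L) :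
    lamSMod R S L x = (1 : S) ⊗ₜ[R] x := rfl

lemma lamSMod_natural {X Y : Type u} [AddCommGroup X] [Module R X] [AddCommGroup Y] [Module R Y]
    (f : X →ₗ[R] Y) (x : X) :
    LinearMap.lTensor S f (lamSMod R S X x) = lamSMod R S Y (f x) := by
  simp [lamSMod]

lemma bij_lamSMod_of_equiv {X Y : Type u} [AddCommGroup X] [Module R X] [AddCommGroup Y]
    [Module R Y] (e : X ≃ₗ[R] Y) (h : Function.Bijective (lamSMod R S X)) :
    Function.Bijective (lamSMod R S Y) := by
  have hfun : ⇑(lamSMod R S Y) =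
      ⇑(LinearEquiv.lTensor S e) ∘ ⇑(lamSMod R S X) ∘ ⇑e.symm := by
    funext y
    simp [lamSMod, LinearEquiv.lTensor]
  rw [hfun]
  exact (LinearEquiv.lTensor S e).bijective.comp (h.comp e.symm.bijective)

section Local

variable [IsLocalRing R] [IsLocalRing S] [IsLocalHom (algebraMap R S)]

lemma mapMaxIdeal_le_jacobson :
    (IsLocalRing.maximalIdeal R).map (algebraMap R S) ≤ Ideal.jacobson ⊥ := by
  rw [IsLocalRing.jacobson_eq_maximalIdeal ⊥ bot_ne_top]
  rw [Ideal.map_le_iff_le_comap]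
  intro a ha
  simp only [Ideal.mem_comap, IsLocalRing.mem_maximalIdeal, mem_nonunits_iff] at *
  exact fun h => ha (IsLocalHom.map_nonunit a h)

/-- Every element of `S ⊗[R] L` is the sum of an element of the image of `L`
and an element of `m • (S ⊗[R] L)`. -/
lemma lamSMod_decomp [IsNoetherianRing S]
    (hJ : ∀ s : S, ∃ r : R,
      s - algebraMap R S r ∈ (IsLocalRing.maximalIdeal R).map (algebraMap R S))
    (L : Type u) [AddCommGroup L] [Module R L] (z : S ⊗[R] L) :
    z ∈ LinearMap.range (lamSMod R S L) ⊔
      (IsLocalRing.maximalIdeal R) • (⊤ : Submodule R (S ⊗[R] L)) := by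
  induction z with
  | zero => exact Submodule.zero_mem _
  | add u v hu hv => exact Submodule.add_mem _ hu hv
  | tmul s x =>
    obtain ⟨r, hr⟩ := hJ s
    have hsplit : s ⊗ₜ[R] x =
        (algebraMap R S r) ⊗ₜ[R] x + (s - algebraMap R S r) ⊗ₜ[R] x := by
      rw [← add_tmul]; ring_nf
    rw [hsplit]
    refine Submodule.add_mem _ (Submodule.mem_sup_left ⟨r • x, ?_⟩) (Submodule.mem_sup_right ?_)
    · rw [lamSMod_apply, tmul_smul, smul_tmul', Algebra.algebraMap_eq_smul_one]
    · -- (s - φ r) ⊗ x ∈ m • ⊤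
      have ht : s - algebraMap R S r ∈
          (IsLocalRing.maximalIdeal R) • (⊤ : Submodule R S) := by
        rw [Ideal.smul_top_eq_map]; exact hr
      refine Submodule.smul_induction_on ht (fun a ha n _ => ?_)
        (fun u v hu hv => by rw [add_tmul]; exact Submodule.add_mem _ hu hv)
      rw [← smul_tmul']
      exact Submodule.smul_mem_smul ha Submodule.mem_top

/-- If a finitely generated `R`-module has a compatible `S`-module structure,
then `L → S ⊗[R] L` is bijective. -/
theorem bij_lamSMod_of_compat [IsNoetherianRing S]
    (hJ : ∀ s : S, ∃ r : R,
      s - algebraMap R S r ∈ (IsLocalRing.maximalIdeal R).map (algebraMap R S))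
    (L : Type u) [AddCommGroup L] [Module R L] [Module.Finite R L]
    (h : HasCompatibleSModule R S L) : Function.Bijective (lamSMod R S L) := by
  obtain ⟨inst, hcomp⟩ := h
  letI := inst
  -- the multiplication map μ : S ⊗[R] L → L
  have hmixed : ∀ (s : S) (r : R) (x : L), s • r • x = r • s • x := by
    intro s r x
    rw [← hcomp r x, ← mul_smul, mul_comm, mul_smul, hcomp]
  let μbil : S →ₗ[R] L →ₗ[R] L :=
    { toFun := fun s =>
        { toFun := fun x => s • x
          map_add' := fun x y => smul_add s x y
          map_smul' := fun r x => hmixed s r x }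
      map_add' := fun s t => LinearMap.ext fun x => add_smul s t x
      map_smul' := fun r s => LinearMap.ext fun x => by
        simp only [LinearMap.coe_mk, AddHom.coe_mk, RingHom.id_apply, LinearMap.smul_apply]
        rw [Algebra.smul_def, mul_smul, hcomp] }
  let μ : S ⊗[R] L →ₗ[R] L := TensorProduct.lift μbil
  have hμlam : ∀ x : L, μ (lamSMod R S L x) = x := fun x => one_smul S x
  have hμs : ∀ (s : S) (z : S ⊗[R] L), μ (s • z) = s • μ z := by
    intro s z
    induction z with
    | zero => simp
    | add u v hu hv => rw [smul_add, map_add, hu, hv, map_add, smul_add]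
    | tmul t x =>
      rw [smul_tmul']
      show (s • t) • x = s • (t • x)
      rw [smul_eq_mul, mul_smul]
  -- the kernel of μ as an S-submodule
  let K : Submodule S (S ⊗[R] L) :=
    { carrier := {z | μ z = 0}
      add_mem' := fun {u v} hu hv => by simp only [Set.mem_setOf_eq, map_add] at *; rw [hu, hv, add_zero]
      zero_mem' := by simp
      smul_mem' := fun s z hz => by
        simp only [Set.mem_setOf_eq] at *
        rw [hμs, hz, smul_zero] }
  haveI : Module.Finite S (S ⊗[R] L) := inferInstance
  haveI : IsNoetherian S (S ⊗[R] L) := isNoetherian_of_isNoetherianRing_of_finite S _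
  have hKfg : K.FG := IsNoetherian.noetherian K
  -- K ≤ J • K
  have hKle : K ≤ ((IsLocalRing.maximalIdeal R).map (algebraMap R S)) • K := by
    intro z hz
    have hz0 : μ z = 0 := hz
    -- the projection π = id - lam ∘ μ
    let π : S ⊗[R] L →ₗ[R] S ⊗[R] L := LinearMap.id - (lamSMod R S L) ∘ₗ μ
    have hπK : ∀ y, μ (π y) = 0 := by
      intro y
      simp only [π, LinearMap.sub_apply, LinearMap.id_apply, LinearMap.comp_apply, map_sub]
      rw [hμlam, sub_self]
    have hπlam : ∀ x : L, π (lamSMod R S L x) = 0 := by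
      intro x
      simp only [π, LinearMap.sub_apply, LinearMap.id_apply, LinearMap.comp_apply]
      rw [hμlam, sub_self]
    have hπz : π z = z := by
      simp only [π, LinearMap.sub_apply, LinearMap.id_apply, LinearMap.comp_apply]
      rw [hz0, map_zero, sub_zero]
    obtain ⟨u, hu, w, hw, huw⟩ := Submodule.mem_sup.mp (lamSMod_decomp R S hJ L z)
    obtain ⟨x, rfl⟩ := hu
    have hzπw : z = π w := by
      rw [← hπz, ← huw, map_add, hπlam, zero_add]
    -- π w ∈ m • range π ≤ m • K
    have hπw : π w ∈ (IsLocalRing.maximalIdeal R) • (K.restrictScalars R) := by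
      have h1 : π w ∈ Submodule.map π ((IsLocalRing.maximalIdeal R) • ⊤) :=
        Submodule.mem_map_of_mem hw
      rw [Submodule.map_smul''] at h1
      refine Submodule.smul_mono le_rfl ?_ h1
      rintro y ⟨y', -, rfl⟩
      exact hπK y'
    have hfin : (IsLocalRing.maximalIdeal R) • (K.restrictScalars R) ≤
        (((IsLocalRing.maximalIdeal R).map (algebraMap R S)) • K).restrictScalars R := by
      refine Submodule.smul_le.mpr fun a ha k hk => ?_
      have : a • k = (algebraMap R S a) • k := (algebraMap_smul S a k).symm
      rw [this]
      exact (Submodule.restrictScalars_mem _ _ _).mpr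
        (Submodule.smul_mem_smul (Ideal.mem_map_of_mem (algebraMap R S) ha) hk)
    rw [hzπw]
    exact (Submodule.restrictScalars_mem _ _ _).mp (hfin hπw)
  have hK0 : K = ⊥ :=
    Submodule.eq_bot_of_le_smul_of_le_jacobson_bot _ K hKfg hKle (mapMaxIdeal_le_jacobson R S)
  constructor
  · intro x y hxy
    have h2 := congrArg μ hxy
    rwa [hμlam, hμlam] at h2
  · intro z
    refine ⟨μ z, ?_⟩
    have hker : μ (z - lamSMod R S L (μ z)) = 0 := by rw [map_sub, hμlam, sub_self]
    have hzK : z - lamSMod R S L (μ z) ∈ K := hker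
    rw [hK0, Submodule.mem_bot, sub_eq_zero] at hzK
    exact hzK.symm


end Local

theorem compat_of_bij_lamSMod (L : Type u) [AddCommGroup L] [Module R L]
    (h : Function.Bijective (lamSMod R S L)) : HasCompatibleSModule R S L := by
  let e := LinearEquiv.ofBijective (lamSMod R S L) h
  refine ⟨{ smul := fun s x => e.symm (s • e x)
            one_smul := fun x => by
              show e.symm ((1 : S) • e x) = x
              rw [one_smul, e.symm_apply_apply]
            mul_smul := fun s t x => by
              show e.symm ((s * t) • e x) = e.symm (s • e (e.symm (t • e x)))
              rw [e.apply_symm_apply, mul_smul]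
            smul_zero := fun s => by
              show e.symm (s • e 0) = 0
              rw [map_zero, smul_zero, map_zero]
            smul_add := fun s x y => by
              show e.symm (s • e (x + y)) = e.symm (s • e x) + e.symm (s • e y)
              rw [map_add, smul_add, map_add]
            add_smul := fun s t x => by
              show e.symm ((s + t) • e x) = e.symm (s • e x) + e.symm (t • e x)
              rw [add_smul, map_add]
            zero_smul := fun x => by
              show e.symm ((0 : S) • e x) = 0
              rw [zero_smul, map_zero] }, ?_⟩
  intro r x
  show e.symm ((algebraMap R S r) • e x) = r • x
  rw [algebraMap_smul, map_smul, e.symm_apply_apply]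

theorem bij_lamSMod_bot (L : Type u) [AddCommGroup L] [Module R L] :
    Function.Bijective (lamSMod R S ↥(⊥ : Submodule R L)) := by
  haveI : Subsingleton ↥(⊥ : Submodule R L) :=
    ⟨fun a b => Subtype.ext (by rw [(Submodule.mem_bot R).mp a.2, (Submodule.mem_bot R).mp b.2])⟩
  exact ⟨fun a b _ => Subsingleton.elim a b, fun z => ⟨0, Subsingleton.elim _ _⟩⟩

section Local

variable [IsLocalRing R] [IsLocalRing S] [IsLocalHom (algebraMap R S)]
variable [IsNoetherianRing R] [IsNoetherianRing S]

theorem bij_lamSMod_submodule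
    (hJ : ∀ s : S, ∃ r : R,
      s - algebraMap R S r ∈ (IsLocalRing.maximalIdeal R).map (algebraMap R S))
    (L : Type u) [AddCommGroup L] [Module R L] [Module.Finite R L]
    (h : Function.Bijective (lamSMod R S L)) (A : Submodule R L) :
    Function.Bijective (lamSMod R S ↥A) := by
  obtain ⟨inst, hcomp⟩ := compat_of_bij_lamSMod R S L h
  letI := inst
  letI : IsScalarTower R S L := ⟨fun r s x => by rw [Algebra.smul_def, mul_smul, hcomp]⟩
  let T : Submodule S L := Submodule.span S (A : Set L)
  have hle : T.restrictScalars R ≤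
      A ⊔ (IsLocalRing.maximalIdeal R) • (T.restrictScalars R) := by
    intro z hz
    refine Submodule.span_induction (fun x hx => Submodule.mem_sup_left hx)
      (Submodule.zero_mem _) (fun x y _ _ hx hy => Submodule.add_mem _ hx hy)
      (fun s y hyT hy => ?_) hz
    obtain ⟨r, hr⟩ := hJ s
    have hsy : s • y = r • y + (s - algebraMap R S r) • y := by
      rw [sub_smul, algebraMap_smul]
      abel
    rw [hsy]
    refine Submodule.add_mem _ (Submodule.smul_mem _ r hy) (Submodule.mem_sup_right ?_)
    have ht : s - algebraMap R S r ∈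
        (IsLocalRing.maximalIdeal R) • (⊤ : Submodule R S) := by
      rw [Ideal.smul_top_eq_map]; exact hr
    refine Submodule.smul_induction_on ht (fun a ha n _ => ?_)
      (fun u v hu hv => by rw [add_smul]; exact Submodule.add_mem _ hu hv)
    rw [smul_assoc]
    exact Submodule.smul_mem_smul ha (Submodule.smul_mem T n hyT)
  haveI : IsNoetherian R L := isNoetherian_of_isNoetherianRing_of_finite R L
  have hTA : T.restrictScalars R ≤ A :=
    Submodule.le_of_le_smul_of_le_jacobson_bot (IsNoetherian.noetherian _)
      (le_of_eq (IsLocalRing.jacobson_eq_maximalIdeal ⊥ bot_ne_top).symm) hle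
  have hstab : ∀ (s : S) (x : L), x ∈ A → s • x ∈ A := fun s x hx =>
    hTA (Submodule.smul_mem T s (Submodule.subset_span hx))
  haveI : Module.Finite R ↥A := Module.Finite.iff_fg.mpr (IsNoetherian.noetherian A)
  refine bij_lamSMod_of_compat R S hJ ↥A
    ⟨{ smul := fun s x => ⟨s • ↑x, hstab s ↑x x.2⟩
       one_smul := fun x => Subtype.ext (one_smul S (x : L))
       mul_smul := fun s t x => Subtype.ext (mul_smul s t (x : L))
       smul_zero := fun s => Subtype.ext (smul_zero s)
       smul_add := fun s x y => Subtype.ext (smul_add s (x : L) (y : L))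
       add_smul := fun s t x => Subtype.ext (add_smul s t (x : L))
       zero_smul := fun x => Subtype.ext (zero_smul S (x : L)) }, ?_⟩
  intro r x
  exact Subtype.ext (hcomp r (x : L))

theorem bij_lamSMod_quotient
    (hJ : ∀ s : S, ∃ r : R,
      s - algebraMap R S r ∈ (IsLocalRing.maximalIdeal R).map (algebraMap R S))
    (L : Type u) [AddCommGroup L] [Module R L] [Module.Finite R L]
    (h : Function.Bijective (lamSMod R S L)) (A : Submodule R L) :
    Function.Bijective (lamSMod R S (L ⧸ A)) := by
  have hA := bij_lamSMod_submodule R S hJ L h A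
  constructor
  · rw [injective_iff_map_eq_zero]
    intro z hz
    obtain ⟨x, rfl⟩ := Submodule.Quotient.mk_surjective A z
    have h1 : LinearMap.lTensor S A.mkQ (lamSMod R S L x) = 0 := by
      rw [lamSMod_natural, Submodule.mkQ_apply]; exact hz
    have h2 : lamSMod R S L x ∈ LinearMap.range (LinearMap.lTensor S A.subtype) := by
      rw [← lTensor_mkQ]
      exact LinearMap.mem_ker.mpr h1
    obtain ⟨w, hw⟩ := h2
    obtain ⟨a, rfl⟩ := hA.surjective w
    rw [lamSMod_natural] at hw
    have h3 : (a : L) = x := h.injective hw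
    rw [(Submodule.Quotient.mk_eq_zero A).mpr (h3 ▸ a.2)]
  · intro z
    obtain ⟨w, hw⟩ := LinearMap.lTensor_surjective S (Submodule.mkQ_surjective A) z
    obtain ⟨x, rfl⟩ := h.surjective w
    refine ⟨Submodule.Quotient.mk x, ?_⟩
    rw [← hw, ← Submodule.mkQ_apply, ← lamSMod_natural]

theorem bij_lamSMod_extension [Module.Flat R S]
    (L : Type u) [AddCommGroup L] [Module R L] (A : Submodule R L)
    (hA : Function.Bijective (lamSMod R S ↥A))
    (hQ : Function.Bijective (lamSMod R S (L ⧸ A))) :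
    Function.Bijective (lamSMod R S L) := by
  constructor
  · rw [injective_iff_map_eq_zero]
    intro x hx
    have h1 : lamSMod R S (L ⧸ A) (Submodule.Quotient.mk x) = 0 := by
      rw [← Submodule.mkQ_apply, ← lamSMod_natural, hx, map_zero]
    have hxA : x ∈ A := (Submodule.Quotient.mk_eq_zero A).mp
      ((injective_iff_map_eq_zero _).mp hQ.injective _ h1)
    have h2 : LinearMap.lTensor S A.subtype (lamSMod R S ↥A ⟨x, hxA⟩) = 0 := by
      rw [lamSMod_natural]; exact hx
    have h3 : lamSMod R S ↥A ⟨x, hxA⟩ = 0 :=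
      Module.Flat.lTensor_preserves_injective_linearMap (M := S) A.subtype
        A.injective_subtype (by rw [h2, map_zero])
    have h4 : (⟨x, hxA⟩ : ↥A) = 0 := (injective_iff_map_eq_zero _).mp hA.injective _ h3
    exact congrArg Subtype.val h4
  · intro z
    obtain ⟨q, hq⟩ := hQ.surjective (LinearMap.lTensor S A.mkQ z)
    obtain ⟨x, rfl⟩ := Submodule.Quotient.mk_surjective A q
    have h1 : LinearMap.lTensor S A.mkQ (z - lamSMod R S L x) = 0 := by
      rw [map_sub, lamSMod_natural, Submodule.mkQ_apply, hq, sub_self]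
    have h2 : z - lamSMod R S L x ∈ LinearMap.range (LinearMap.lTensor S A.subtype) := by
      rw [← lTensor_mkQ]
      exact LinearMap.mem_ker.mpr h1
    obtain ⟨w, hw⟩ := h2
    obtain ⟨a, rfl⟩ := hA.surjective w
    rw [lamSMod_natural] at hw
    refine ⟨x + ↑a, ?_⟩
    rw [map_add]
    show lamSMod R S L x + lamSMod R S L (A.subtype a) = z
    rw [hw]
    abel

end Local

end Aux

section Support

set_option synthInstance.maxHeartbeats 400000
set_option maxHeartbeats 1000000

variable (R : Type u) [CommRing R]

/-- Determinant trick: if `Ann X ≤ p` and `r X ⊆ p X` then `r ∈ p`. -/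
theorem mem_prime_of_smul_top_le (X : Type u) [AddCommGroup X] [Module R X] [Module.Finite R X]
    (p : Ideal R) [hp : p.IsPrime] (hX : Module.annihilator R X ≤ p) (r : R)
    (h : ∀ x : X, r • x ∈ p • (⊤ : Submodule R X)) : r ∈ p := by
  have hrange : LinearMap.range (algebraMap R (Module.End R X) r) ≤ p • (⊤ : Submodule R X) := by
    rintro _ ⟨x, rfl⟩
    rw [Module.algebraMap_end_apply]
    exact h x
  obtain ⟨q, hmonic, -, hcoeff, heval⟩ :=
    LinearMap.exists_monic_and_coeff_mem_pow_and_aeval_eq_zero_of_range_le_smul R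
      (algebraMap R (Module.End R X) r) p hrange
  have heq : Polynomial.aeval ((algebraMap R (Module.End R X)) r) q
      = algebraMap R (Module.End R X) (Polynomial.eval r q) := by
    rw [Polynomial.aeval_algebraMap_apply, Polynomial.coe_aeval_eq_eval]
  have hann : Polynomial.eval r q ∈ Module.annihilator R X := Module.mem_annihilator.mpr fun x => by
    have h0 : (Polynomial.aeval ((algebraMap R (Module.End R X)) r) q) x = 0 := by
      rw [heval]; rfl
    rw [heq, Module.algebraMap_end_apply] at h0
    exact h0
  have hq : Polynomial.eval r q ∈ p := hX hann
  have hrn : r ^ q.natDegree ∈ p := by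
    have hsum : ∑ i ∈ Finset.range q.natDegree, q.coeff i * r ^ i ∈ p :=
      Submodule.sum_mem p fun i hi => p.mul_mem_right _
        (Ideal.pow_le_self (Nat.sub_ne_zero_of_lt (Finset.mem_range.mp hi)) (hcoeff i))
    have hev : r ^ q.natDegree
        = Polynomial.eval r q - ∑ i ∈ Finset.range q.natDegree, q.coeff i * r ^ i := by
      rw [Polynomial.eval_eq_sum_range, Finset.sum_range_succ, hmonic.coeff_natDegree, one_mul]
      ring
    rw [hev]
    exact Submodule.sub_mem p hq hsum
  exact hp.mem_of_pow_mem _ hrn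

/-- If `Ann X ≤ p` then `K ⊗[R] X` is nontrivial, where `K` is the fraction
field of `R ⧸ p`. -/
theorem nontrivial_fracQuot_tensor (p : Ideal R) [hp : p.IsPrime]
    (K : Type u) [Field K] [Algebra (R ⧸ p) K] [IsFractionRing (R ⧸ p) K]
    [Algebra R K] [IsScalarTower R (R ⧸ p) K]
    (X : Type u) [AddCommGroup X] [Module R X] [Module.Finite R X]
    (hX : Module.annihilator R X ≤ p) : Nontrivial (K ⊗[R] X) := by
  haveI : IsDomain (R ⧸ p) := Ideal.Quotient.isDomain p
  have hfaith : ∀ a : R ⧸ p, (∀ y : (R ⧸ p) ⊗[R] X, a • y = 0) → a = 0 := by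
    intro a hann
    obtain ⟨r, rfl⟩ := Ideal.Quotient.mk_surjective a
    rw [Ideal.Quotient.eq_zero_iff_mem]
    refine mem_prime_of_smul_top_le R X p hX r fun x => ?_
    have h0 : ((Ideal.Quotient.mk p r) • (((1 : R ⧸ p)) ⊗ₜ[R] x) : (R ⧸ p) ⊗[R] X) = 0 :=
      hann _
    rw [smul_tmul', smul_eq_mul, mul_one] at h0
    have h1 := congrArg (quotTensorEquivQuotSMul X p) h0
    rw [map_zero, quotTensorEquivQuotSMul_mk_tmul] at h1
    exact (Submodule.Quotient.mk_eq_zero _).mp h1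
  haveI : Module.Finite (R ⧸ p) ((R ⧸ p) ⊗[R] X) := inferInstance
  have hex : ∃ y : (R ⧸ p) ⊗[R] X, ∀ a : R ⧸ p, a • y = 0 → a = 0 := by
    by_contra hco
    push_neg at hco
    choose f hf0 hfne using hco
    obtain ⟨t, ht⟩ := Module.Finite.fg_top (R := R ⧸ p) (M := (R ⧸ p) ⊗[R] X)
    have hcne : (∏ y ∈ t, f y) ≠ 0 := Finset.prod_ne_zero_iff.mpr fun y _ => hfne y
    have hc : ∀ y : (R ⧸ p) ⊗[R] X, (∏ y ∈ t, f y) • y = 0 := by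
      intro z
      have hz : z ∈ Submodule.span (R ⧸ p) (t : Set ((R ⧸ p) ⊗[R] X)) := ht ▸ Submodule.mem_top
      refine Submodule.span_induction (fun y hy => ?_) (smul_zero _)
        (fun u v _ _ hu hv => by rw [smul_add, hu, hv, add_zero])
        (fun a u _ hu => by rw [← mul_smul, mul_comm, mul_smul, hu, smul_zero]) hz
      obtain ⟨d, hd⟩ := Finset.dvd_prod_of_mem f hy
      rw [hd, mul_comm, mul_smul, hf0, smul_zero]
    exact hcne (hfaith _ hc)
  obtain ⟨y, hy⟩ := hex
  have hinj : Function.Injective (LinearMap.toSpanSingleton (R ⧸ p) ((R ⧸ p) ⊗[R] X) y) := by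
    rw [injective_iff_map_eq_zero]
    intro a ha
    exact hy a ha
  haveI : Module.Flat (R ⧸ p) K := IsLocalization.flat K (nonZeroDivisors (R ⧸ p))
  have hinj2 : Function.Injective
      (LinearMap.lTensor K (LinearMap.toSpanSingleton (R ⧸ p) ((R ⧸ p) ⊗[R] X) y)) :=
    Module.Flat.lTensor_preserves_injective_linearMap _ hinj
  haveI : Nontrivial (K ⊗[R ⧸ p] (R ⧸ p)) :=
    Equiv.nontrivial (TensorProduct.rid (R ⧸ p) K).toEquiv
  haveI : Nontrivial (K ⊗[R ⧸ p] ((R ⧸ p) ⊗[R] X)) := by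
    obtain ⟨u, v, huv⟩ := exists_pair_ne (K ⊗[R ⧸ p] (R ⧸ p))
    exact ⟨_, _, fun hc => huv (hinj2 hc)⟩
  exact Equiv.nontrivial
    ((TensorProduct.AlgebraTensorModule.cancelBaseChange R (R ⧸ p) (R ⧸ p) K X).symm.toEquiv)

/-- Over a field `K` which is an `R`-algebra, the tensor product (over `R`) with `K`
of two modules with nontrivial `K`-base-change is nontrivial. -/
theorem nontrivial_tensor_tensor (K : Type u) [Field K] [Algebra R K]
    (M N : Type u) [AddCommGroup M] [Module R M] [AddCommGroup N] [Module R N]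
    (hM : Nontrivial (K ⊗[R] M)) (hN : Nontrivial (K ⊗[R] N)) :
    Nontrivial (K ⊗[R] (M ⊗[R] N)) := by
  haveI := hM; haveI := hN
  haveI hT : Nontrivial ((K ⊗[R] M) ⊗[K] (K ⊗[R] N)) := by
    obtain ⟨y, hy⟩ := exists_ne (0 : K ⊗[R] N)
    have hinj : Function.Injective (LinearMap.toSpanSingleton K (K ⊗[R] N) y) := by
      rw [injective_iff_map_eq_zero]
      intro a ha
      rcases smul_eq_zero.mp ha with h | h
      · exact h
      · exact absurd h hy
    have hinj2 : Function.Injective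
        (LinearMap.lTensor (K ⊗[R] M) (LinearMap.toSpanSingleton K (K ⊗[R] N) y)) :=
      Module.Flat.lTensor_preserves_injective_linearMap _ hinj
    haveI : Nontrivial ((K ⊗[R] M) ⊗[K] K) :=
      Equiv.nontrivial (TensorProduct.rid K (K ⊗[R] M)).toEquiv
    obtain ⟨u, v, huv⟩ := exists_pair_ne ((K ⊗[R] M) ⊗[K] K)
    exact ⟨_, _, fun hc => huv (hinj2 hc)⟩
  have eqv : (K ⊗[R] (M ⊗[R] N)) ≃ ((K ⊗[R] M) ⊗[K] (K ⊗[R] N)) :=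
    ((TensorProduct.assoc R K M N).symm.toEquiv).trans
      ((TensorProduct.AlgebraTensorModule.cancelBaseChange R K K (K ⊗[R] M) N).symm.toEquiv)
  exact Equiv.nontrivial eqv

/-- If `K ⊗[R] X` is nontrivial for the fraction field `K` of `R ⧸ p`,
then `Ann X ≤ p`. -/
theorem ann_le_of_nontrivial_frac (p : Ideal R) [hp : p.IsPrime]
    (K : Type u) [Field K] [Algebra (R ⧸ p) K] [IsFractionRing (R ⧸ p) K]
    [Algebra R K] [IsScalarTower R (R ⧸ p) K]
    (X : Type u) [AddCommGroup X] [Module R X]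
    (hX : Nontrivial (K ⊗[R] X)) : Module.annihilator R X ≤ p := by
  haveI : IsDomain (R ⧸ p) := Ideal.Quotient.isDomain p
  intro a ha
  by_contra hap
  have hmk : (Ideal.Quotient.mk p a : R ⧸ p) ≠ 0 := fun hc =>
    hap (Ideal.Quotient.eq_zero_iff_mem.mp hc)
  have h0 : algebraMap R K a = algebraMap (R ⧸ p) K (Ideal.Quotient.mk p a) := by
    rw [IsScalarTower.algebraMap_apply R (R ⧸ p) K, Ideal.Quotient.algebraMap_eq]
  have hunit : IsUnit (algebraMap R K a) := by
    rw [h0, isUnit_iff_ne_zero]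
    intro hc
    exact hmk (IsFractionRing.injective (R ⧸ p) K (by rw [hc, map_zero]))
  obtain ⟨u, hu⟩ := hunit.exists_right_inv
  have hzero : ∀ z : K ⊗[R] X, z = 0 := by
    intro z
    induction z with
    | zero => rfl
    | add u v hu hv => rw [hu, hv, add_zero]
    | tmul k w =>
      have hk : k = a • (u * k) := by
        rw [Algebra.smul_def, ← mul_assoc, hu, one_mul]
      rw [hk, smul_tmul a (u * k) w, Module.mem_annihilator.mp ha w, tmul_zero]
  obtain ⟨z1, z2, h12⟩ := hX
  exact h12 (by rw [hzero z1, hzero z2])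

/-- Key supporting fact: `Supp M ∩ Supp N ⊆ Supp (M ⊗ N)` in terms of annihilators. -/
theorem annihilator_tensor_le (p : Ideal R) [hp : p.IsPrime]
    (M N : Type u) [AddCommGroup M] [Module R M] [Module.Finite R M]
    [AddCommGroup N] [Module R N] [Module.Finite R N]
    (hM : Module.annihilator R M ≤ p) (hN : Module.annihilator R N ≤ p) :
    Module.annihilator R (M ⊗[R] N) ≤ p := by
  haveI : IsDomain (R ⧸ p) := Ideal.Quotient.isDomain p
  exact ann_le_of_nontrivial_frac R p (FractionRing (R ⧸ p)) (M ⊗[R] N)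
    (nontrivial_tensor_tensor R (FractionRing (R ⧸ p)) M N
      (nontrivial_fracQuot_tensor R p (FractionRing (R ⧸ p)) M hM)
      (nontrivial_fracQuot_tensor R p (FractionRing (R ⧸ p)) N hN))

end Support


section Wrapper

variable (R S : Type u) [CommRing R] [CommRing S] [Algebra R S]

theorem bij_lamSMod_quotientMap_iff (p : Ideal R) :
    Function.Bijective (lamSMod R S (R ⧸ p)) ↔
      Function.Bijective (Ideal.quotientMap (p.map (algebraMap R S)) (algebraMap R S)
        Ideal.le_comap_map) := by
  let e1 : S ⊗[R] (R ⧸ p) ≃ₗ[R] S ⧸ (p • (⊤ : Submodule R S)) := tensorQuotEquivQuotSMul S p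
  let e2 : (S ⧸ (p • (⊤ : Submodule R S))) ≃ₗ[R]
      (S ⧸ Submodule.restrictScalars R (p.map (algebraMap R S))) :=
    Submodule.quotEquivOfEq _ _ (Ideal.smul_top_eq_map p)
  let e3 := Submodule.Quotient.restrictScalarsEquiv R (p.map (algebraMap R S) : Ideal S)
  have key : ∀ x : R ⧸ p,
      e3 (e2 (e1 (lamSMod R S (R ⧸ p) x))) =
        Ideal.quotientMap (p.map (algebraMap R S)) (algebraMap R S) Ideal.le_comap_map x := by
    intro x
    obtain ⟨r, rfl⟩ := Ideal.Quotient.mk_surjective x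
    rw [lamSMod_apply]
    have h1 : e1 ((1:S) ⊗ₜ[R] (Ideal.Quotient.mk p r)) =
        Submodule.Quotient.mk (r • (1:S)) := tensorQuotEquivQuotSMul_tmul_mk p (1:S) r
    rw [h1, Ideal.quotientMap_mk, Submodule.quotEquivOfEq_mk,
      Submodule.Quotient.restrictScalarsEquiv_mk, Algebra.algebraMap_eq_smul_one]
    rfl
  constructor
  · intro h
    have hcomp : ⇑(Ideal.quotientMap (p.map (algebraMap R S)) (algebraMap R S)
        Ideal.le_comap_map) = (⇑e3 ∘ ⇑e2 ∘ ⇑e1) ∘ ⇑(lamSMod R S (R ⧸ p)) := by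
      funext x; exact (key x).symm
    rw [hcomp]
    exact ((e3.bijective.comp (e2.bijective.comp e1.bijective))).comp h
  · intro h
    have hcomp : ⇑(lamSMod R S (R ⧸ p)) =
        (⇑e1.symm ∘ ⇑e2.symm ∘ ⇑e3.symm) ∘
          ⇑(Ideal.quotientMap (p.map (algebraMap R S)) (algebraMap R S) Ideal.le_comap_map) := by
      funext x
      show lamSMod R S (R ⧸ p) x = e1.symm (e2.symm (e3.symm
        (Ideal.quotientMap (p.map (algebraMap R S)) (algebraMap R S) Ideal.le_comap_map x)))
      rw [← key x]
      simp
    rw [hcomp]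
    exact ((e1.symm.bijective.comp (e2.symm.bijective.comp e3.symm.bijective))).comp h

end Wrapper

set_option maxHeartbeats 1600000 in
set_option synthInstance.maxHeartbeats 400000 in
/-- Let `φ : (R, m) → (S, n)` be a flat local homomorphism of commutative Noetherian local
rings such that `R/m → S/mS` is an isomorphism, and let `M`, `N` be finitely generated
`R`-modules. Then `M ⊗_R N` has a compatible `S`-module structure iff for every prime
`p ∈ Supp_R M ∩ Supp_R N` the induced map `R/p → S/pS` is an isomorphism. -/
theorem hasCompatibleSModule_tensorProduct_iff
    (R S : Type u) [CommRing R] [CommRing S] [IsLocalRing R] [IsLocalRing S]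
    [IsNoetherianRing R] [IsNoetherianRing S] [Algebra R S] [Module.Flat R S]
    [IsLocalHom (algebraMap R S)]
    (hres : Function.Bijective
      (Ideal.quotientMap ((IsLocalRing.maximalIdeal R).map (algebraMap R S)) (algebraMap R S)
        Ideal.le_comap_map))
    (M N : Type u) [AddCommGroup M] [Module R M] [Module.Finite R M]
    [AddCommGroup N] [Module R N] [Module.Finite R N] :
    HasCompatibleSModule R S (M ⊗[R] N) ↔
      ∀ p : PrimeSpectrum R, p ∈ Module.support R M ∩ Module.support R N →
        Function.Bijective
          (Ideal.quotientMap (p.asIdeal.map (algebraMap R S)) (algebraMap R S)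
            Ideal.le_comap_map) := by
  have hJ : ∀ s : S, ∃ r : R,
      s - algebraMap R S r ∈ (IsLocalRing.maximalIdeal R).map (algebraMap R S) := by
    intro s
    obtain ⟨x, hx⟩ := hres.surjective (Ideal.Quotient.mk _ s)
    obtain ⟨r, rfl⟩ := Ideal.Quotient.mk_surjective x
    rw [Ideal.quotientMap_mk] at hx
    exact ⟨r, Ideal.Quotient.eq.mp hx.symm⟩
  constructor
  · intro h p hp
    haveI := p.2
    rw [← bij_lamSMod_quotientMap_iff]
    have hbij := bij_lamSMod_of_compat R S hJ (M ⊗[R] N) h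
    have hAnnM : Module.annihilator R M ≤ p.asIdeal := Module.mem_support_iff_of_finite.mp hp.1
    have hAnnN : Module.annihilator R N ≤ p.asIdeal := Module.mem_support_iff_of_finite.mp hp.2
    have hAnnT := annihilator_tensor_le R p.asIdeal M N hAnnM hAnnN
    obtain ⟨x, hxann⟩ := Module.mem_support_iff_exists_annihilator.mp
      (Module.mem_support_iff_of_finite.mpr hAnnT)
    have hker : LinearMap.ker (LinearMap.toSpanSingleton R (M ⊗[R] N) x) =
        (Submodule.span R {x}).annihilator := by
      ext a
      rw [LinearMap.mem_ker, LinearMap.toSpanSingleton_apply,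
        Submodule.mem_annihilator_span_singleton]
    have e1 : (R ⧸ (Submodule.span R {x}).annihilator) ≃ₗ[R] ↥(Submodule.span R {x}) :=
      (Submodule.quotEquivOfEq _ _ hker.symm) ≪≫ₗ
        (LinearMap.toSpanSingleton R (M ⊗[R] N) x).quotKerEquivRange ≪≫ₗ
        LinearEquiv.ofEq _ _ (LinearMap.span_singleton_eq_range R (M ⊗[R] N) x).symm
    have hQJ : Function.Bijective (lamSMod R S (R ⧸ (Submodule.span R {x}).annihilator)) :=
      bij_lamSMod_of_equiv R S e1.symm (bij_lamSMod_submodule R S hJ _ hbij _)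
    haveI : Module.Finite R (R ⧸ (Submodule.span R {x}).annihilator) :=
      Module.Finite.of_surjective (Submodule.mkQ _) (Submodule.Quotient.mk_surjective _)
    let g : (R ⧸ (Submodule.span R {x}).annihilator) →ₗ[R] (R ⧸ p.asIdeal) :=
      Submodule.liftQ _ (Submodule.mkQ (p.asIdeal : Submodule R R))
        (by rw [Submodule.ker_mkQ]; exact hxann)
    have hgsurj : Function.Surjective g := by
      intro z
      obtain ⟨r, rfl⟩ := Submodule.Quotient.mk_surjective _ z
      exact ⟨Submodule.Quotient.mk r, rfl⟩
    have e2 : ((R ⧸ (Submodule.span R {x}).annihilator) ⧸ LinearMap.ker g) ≃ₗ[R]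
        (R ⧸ p.asIdeal) := g.quotKerEquivOfSurjective hgsurj
    exact bij_lamSMod_of_equiv R S e2 (bij_lamSMod_quotient R S hJ _ hQJ _)
  · intro h
    apply compat_of_bij_lamSMod
    obtain ⟨A, hAs, hAmax⟩ := (set_has_maximal_iff_noetherian.mpr
      (isNoetherian_of_isNoetherianRing_of_finite R (M ⊗[R] N)))
      {B : Submodule R (M ⊗[R] N) | Function.Bijective (lamSMod R S ↥B)}
      ⟨⊥, bij_lamSMod_bot R S _⟩
    by_cases hAtop : A = ⊤
    · exact bij_lamSMod_of_equiv R S (Submodule.topEquiv) (hAtop ▸ hAs)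
    exfalso
    haveI : Nontrivial ((M ⊗[R] N) ⧸ A) :=
      Submodule.Quotient.nontrivial_iff.mpr hAtop
    obtain ⟨p, hp⟩ := associatedPrimes.nonempty R ((M ⊗[R] N) ⧸ A)
    obtain ⟨hpprime, x, hxp'⟩ := isAssociatedPrime_iff.mp hp
    have hxp : p = (Submodule.span R {x}).annihilator := by
      rw [hxp']; ext a
      rw [Submodule.mem_colon_singleton, Submodule.mem_annihilator_span_singleton, Submodule.mem_bot]
    haveI := hpprime
    obtain ⟨y, rfl⟩ := Submodule.Quotient.mk_surjective A x
    have hann1 : Module.annihilator R (M ⊗[R] N) ≤ p := by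
      intro a ha
      rw [hxp]
      refine Submodule.mem_annihilator.mpr fun n _ => ?_
      obtain ⟨z, rfl⟩ := Submodule.Quotient.mk_surjective A n
      rw [← Submodule.Quotient.mk_smul, Module.mem_annihilator.mp ha z]
      rfl
    have hannM : Module.annihilator R M ≤ Module.annihilator R (M ⊗[R] N) := by
      intro a ha
      rw [Module.mem_annihilator] at ha ⊢
      intro z
      induction z with
      | zero => exact smul_zero a
      | add u v hu hv => rw [smul_add, hu, hv, add_zero]
      | tmul m n => rw [smul_tmul' a m n, ha m, zero_tmul]
    have hannN : Module.annihilator R N ≤ Module.annihilator R (M ⊗[R] N) := by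
      intro a ha
      rw [Module.mem_annihilator] at ha ⊢
      intro z
      induction z with
      | zero => exact smul_zero a
      | add u v hu hv => rw [smul_add, hu, hv, add_zero]
      | tmul m n => rw [show a • (m ⊗ₜ[R] n) = m ⊗ₜ[R] (a • n) from (tmul_smul a m n).symm, ha n, tmul_zero]
    have hsupp : (⟨p, hpprime⟩ : PrimeSpectrum R) ∈
        Module.support R M ∩ Module.support R N :=
      ⟨Module.mem_support_iff_of_finite.mpr (le_trans hannM hann1),
       Module.mem_support_iff_of_finite.mpr (le_trans hannN hann1)⟩
    have hiff := bij_lamSMod_quotientMap_iff R S p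
    have harg := h ⟨p, hpprime⟩ hsupp
    have hpbij : Function.Bijective (lamSMod R S (R ⧸ p)) := hiff.mpr harg
    set A' := (Submodule.span R {Submodule.Quotient.mk (p := A) y}).comap A.mkQ with hA'def
    have hAA' : A ≤ A' := by
      intro a ha
      have h0 : A.mkQ a = 0 := (Submodule.Quotient.mk_eq_zero A).mpr ha
      rw [hA'def, Submodule.mem_comap, h0]
      exact Submodule.zero_mem _
    have hynA : y ∉ A := by
      intro hy
      refine hpprime.ne_top ?_
      rw [hxp, (Submodule.Quotient.mk_eq_zero A).mpr hy, Submodule.span_zero_singleton,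
        Submodule.annihilator_bot]
    have hlt : A < A' := lt_of_le_of_ne hAA' fun he => hynA (by
      rw [he, hA'def]
      exact Submodule.mem_comap.mpr (Submodule.mem_span_singleton_self _))
    have hB : Function.Bijective (lamSMod R S ↥(A.comap A'.subtype)) :=
      bij_lamSMod_of_equiv R S (Submodule.comapSubtypeEquivOfLe hAA').symm hAs
    let g : ↥A' →ₗ[R] ((M ⊗[R] N) ⧸ A) := A.mkQ ∘ₗ A'.subtype
    have hkerg : LinearMap.ker g = A.comap A'.subtype := by
      ext a
      rw [LinearMap.mem_ker, Submodule.mem_comap]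
      show A.mkQ (A'.subtype a) = 0 ↔ _
      rw [Submodule.mkQ_apply, Submodule.Quotient.mk_eq_zero]
    have hrangeg : LinearMap.range g =
        Submodule.span R {Submodule.Quotient.mk (p := A) y} := by
      rw [LinearMap.range_comp, Submodule.range_subtype, hA'def, Submodule.map_comap_eq,
        Submodule.range_mkQ, top_inf_eq]
    have hker2 : LinearMap.ker (LinearMap.toSpanSingleton R ((M ⊗[R] N) ⧸ A)
        (Submodule.Quotient.mk y)) = p := by
      ext a
      rw [LinearMap.mem_ker, LinearMap.toSpanSingleton_apply, hxp,
        Submodule.mem_annihilator_span_singleton]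
    have e4 : (↥A' ⧸ (A.comap A'.subtype)) ≃ₗ[R] (R ⧸ p) :=
      (Submodule.quotEquivOfEq _ _ hkerg.symm) ≪≫ₗ g.quotKerEquivRange ≪≫ₗ
        (LinearEquiv.ofEq _ _ (hrangeg.symm ▸ (LinearMap.span_singleton_eq_range R
          ((M ⊗[R] N) ⧸ A) (Submodule.Quotient.mk y)) : LinearMap.range g =
            LinearMap.range (LinearMap.toSpanSingleton R ((M ⊗[R] N) ⧸ A)
              (Submodule.Quotient.mk y)))) ≪≫ₗ
        ((Submodule.quotEquivOfEq _ _ hker2.symm) ≪≫ₗ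
          (LinearMap.toSpanSingleton R ((M ⊗[R] N) ⧸ A)
            (Submodule.Quotient.mk y)).quotKerEquivRange).symm
    have hA'bij : Function.Bijective (lamSMod R S ↥A') :=
      bij_lamSMod_extension R S ↥A' (A.comap A'.subtype) hB
        (bij_lamSMod_of_equiv R S e4.symm hpbij)
    exact hAmax A' hA'bij hlt
end

section
/- Let φ : (R,m) → (S,n) be a flat local homomorphism of commutative Noetherian local rings such that the induced map R/m → S/mS is an isomorphism, and let M and N be finitely generated R-modules. If for every minimal element p of the set Supp_R(M) ∩ Supp_R(N) (ordered by inclusion) the induced ring map R/p → S/pS is an isomorphism, then for every prime ideal p ∈ Supp_R(M) ∩ Supp_R(N) the induced ring map R/p → S/pS is an isomorphism. -/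
universe u

open CategoryTheory

/-- If `R/q → S/qS` is bijective and `q ≤ p`, then `R/p → S/pS` is bijective. -/
lemma quotientMap_bijective_of_le {R S : Type u} [CommRing R] [CommRing S]
    (φ : R →+* S) {q p : Ideal R} (hqp : q ≤ p)
    (hf : Function.Bijective (Ideal.quotientMap (q.map φ) φ Ideal.le_comap_map)) :
    Function.Bijective (Ideal.quotientMap (p.map φ) φ Ideal.le_comap_map) := by
  set f := Ideal.quotientMap (q.map φ) φ Ideal.le_comap_map with hfdef
  constructor
  · rw [injective_iff_map_eq_zero]
    intro a ha
    obtain ⟨r, rfl⟩ := Ideal.Quotient.mk_surjective a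
    rw [Ideal.quotientMap_mk, Ideal.Quotient.eq_zero_iff_mem] at ha
    rw [Ideal.Quotient.eq_zero_iff_mem]
    -- φ r ∈ p.map φ, want r ∈ p
    have hmap : (p.map φ).map (Ideal.Quotient.mk (q.map φ))
        = (p.map (Ideal.Quotient.mk q)).map f := by
      rw [Ideal.map_map, Ideal.map_map, hfdef, Ideal.quotientMap_comp_mk]
    have h1 : Ideal.Quotient.mk (q.map φ) (φ r) ∈ (p.map (Ideal.Quotient.mk q)).map f := by
      rw [← hmap]
      exact Ideal.mem_map_of_mem _ ha
    have h2 : f (Ideal.Quotient.mk q r) ∈ (p.map (Ideal.Quotient.mk q)).map f := by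
      rwa [hfdef, Ideal.quotientMap_mk]
    have h3 : Ideal.Quotient.mk q r ∈ p.map (Ideal.Quotient.mk q) := by
      have h4 := Ideal.comap_map_of_bijective f hf (I := p.map (Ideal.Quotient.mk q))
      rw [← h4]
      exact h2
    exact (Ideal.mem_quotient_iff_mem hqp).mp h3
  · intro s
    obtain ⟨t, rfl⟩ := Ideal.Quotient.mk_surjective s
    obtain ⟨a, ha⟩ := hf.2 (Ideal.Quotient.mk (q.map φ) t)
    obtain ⟨r, rfl⟩ := Ideal.Quotient.mk_surjective a
    rw [Ideal.quotientMap_mk, Ideal.Quotient.eq] at ha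
    refine ⟨Ideal.Quotient.mk p r, ?_⟩
    rw [Ideal.quotientMap_mk, Ideal.Quotient.eq]
    exact Ideal.map_mono hqp ha

/-- Let `φ : (R, m) → (S, n)` be a flat local homomorphism of commutative Noetherian local
rings such that `R/m → S/mS` is an isomorphism, and let `M`, `N` be finitely generated
`R`-modules. If `R/p → S/pS` is an isomorphism for every minimal element `p` of
`Supp_R M ∩ Supp_R N`, then `R/p → S/pS` is an isomorphism for every
`p ∈ Supp_R M ∩ Supp_R N`. -/
theorem support_bijective_of_minimal_bijective
    (R S : Type u) [CommRing R] [CommRing S] [IsLocalRing R] [IsLocalRing S]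
    [IsNoetherianRing R] [IsNoetherianRing S] [Algebra R S] [Module.Flat R S]
    [IsLocalHom (algebraMap R S)]
    (hres : Function.Bijective
      (Ideal.quotientMap ((IsLocalRing.maximalIdeal R).map (algebraMap R S)) (algebraMap R S)
        Ideal.le_comap_map))
    (M N : Type u) [AddCommGroup M] [Module R M] [Module.Finite R M]
    [AddCommGroup N] [Module R N] [Module.Finite R N]
    (h : ∀ p : PrimeSpectrum R, Minimal (· ∈ Module.support R M ∩ Module.support R N) p →
      Function.Bijective
        (Ideal.quotientMap (p.asIdeal.map (algebraMap R S)) (algebraMap R S)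
          Ideal.le_comap_map)) :
    ∀ p : PrimeSpectrum R, p ∈ Module.support R M ∩ Module.support R N →
      Function.Bijective
        (Ideal.quotientMap (p.asIdeal.map (algebraMap R S)) (algebraMap R S)
          Ideal.le_comap_map) := by
  intro p hp
  -- The set is the zero locus of I = ann M ⊔ ann N
  have hsupp : Module.support R M ∩ Module.support R N
      = PrimeSpectrum.zeroLocus ((Module.annihilator R M ⊔ Module.annihilator R N : Ideal R)) := by
    rw [Module.support_eq_zeroLocus, Module.support_eq_zeroLocus,
      ← PrimeSpectrum.zeroLocus_sup]
  set I : Ideal R := Module.annihilator R M ⊔ Module.annihilator R N with hI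
  have hIp : I ≤ p.asIdeal := by
    have h5 : p ∈ PrimeSpectrum.zeroLocus (I : Set R) := hsupp ▸ hp
    exact PrimeSpectrum.mem_zeroLocus _ _ |>.mp h5
  obtain ⟨q, hq, hqp⟩ := Ideal.exists_minimalPrimes_le hIp
  have hqprime : q.IsPrime := hq.1.1
  let Q : PrimeSpectrum R := ⟨q, hqprime⟩
  have hQmin : Minimal (· ∈ Module.support R M ∩ Module.support R N) Q := by
    constructor
    · show Q ∈ Module.support R M ∩ Module.support R N
      rw [hsupp]
      exact PrimeSpectrum.mem_zeroLocus _ _ |>.mpr hq.1.2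
    · intro y hy hyQ
      have hy' : y ∈ PrimeSpectrum.zeroLocus (I : Set R) := hsupp ▸ hy
      exact hq.2 ⟨y.isPrime, PrimeSpectrum.mem_zeroLocus _ _ |>.mp hy'⟩ hyQ
  exact quotientMap_bijective_of_le (algebraMap R S) hqp (h Q hQmin)
end

section
/- Let φ : (R,m) → (S,n) be a flat local homomorphism of commutative Noetherian local rings such that the induced map R/m → S/mS is an isomorphism, and let M and N be finitely generated R-modules. Then Hom_R(S ⊗_R M, N) ≅ Hom_R(S, Hom_R(M,N)) as R-modules, and this module is finitely generated over R. -/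
universe u

open TensorProduct

/-- If `S = φ(R) + m S`, then `S = φ(R) + m^k S` for every `k`. -/
lemma range_sup_pow_smul_top (R S : Type u) [CommRing R] [CommRing S] [Algebra R S]
    (I : Ideal R)
    (h1 : (⊤ : Submodule R S) =
      LinearMap.range (Algebra.linearMap R S) ⊔ (I • ⊤)) :
    ∀ k : ℕ, (⊤ : Submodule R S) =
      LinearMap.range (Algebra.linearMap R S) ⊔ (I ^ k • ⊤) := by
  intro k
  induction k with
  | zero => rw [pow_zero, Ideal.one_eq_top, Submodule.top_smul, sup_top_eq]
  | succ k ih =>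
    apply le_antisymm _ le_top
    have h2 : I ^ k • (⊤ : Submodule R S) =
        I ^ k • LinearMap.range (Algebra.linearMap R S) ⊔ I ^ (k + 1) • ⊤ := by
      conv_lhs => rw [h1]
      rw [Submodule.smul_sup, ← Submodule.smul_assoc, Ideal.smul_eq_mul, ← pow_succ]
    conv_lhs => rw [ih]
    apply sup_le le_sup_left
    rw [h2]
    apply sup_le
    · apply le_trans _ (le_sup_left)
      rw [Submodule.smul_le]
      rintro a ha x ⟨r, rfl⟩
      exact ⟨a • r, by simp [Algebra.smul_def]⟩
    · exact le_sup_right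

/-- Let `φ : (R, m) → (S, n)` be a flat local homomorphism of commutative Noetherian local
rings such that `R/m → S/mS` is an isomorphism, and let `M`, `N` be finitely generated
`R`-modules. Then `Hom_R(S ⊗_R M, N) ≅ Hom_R(S, Hom_R(M, N))` as `R`-modules, and this
module is finitely generated over `R`. -/
theorem hom_baseChange_iso_and_finite
    (R S : Type u) [CommRing R] [CommRing S] [IsLocalRing R] [IsLocalRing S]
    [IsNoetherianRing R] [IsNoetherianRing S] [Algebra R S] [Module.Flat R S]
    [IsLocalHom (algebraMap R S)]
    (hres : Function.Bijective
      (Ideal.quotientMap ((IsLocalRing.maximalIdeal R).map (algebraMap R S)) (algebraMap R S)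
        Ideal.le_comap_map))
    (M N : Type u) [AddCommGroup M] [Module R M] [Module.Finite R M]
    [AddCommGroup N] [Module R N] [Module.Finite R N] :
    Nonempty (((S ⊗[R] M) →ₗ[R] N) ≃ₗ[R] (S →ₗ[R] (M →ₗ[R] N))) ∧
      Module.Finite R ((S ⊗[R] M) →ₗ[R] N) := by
  constructor
  · exact ⟨(TensorProduct.lift.equiv (RingHom.id R) S M N).symm⟩
  -- key: `S = φ(R) + m S`
  have h1 : (⊤ : Submodule R S) =
      LinearMap.range (Algebra.linearMap R S) ⊔ (IsLocalRing.maximalIdeal R • ⊤) := by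
    apply le_antisymm _ le_top
    intro s _
    obtain ⟨x, hx⟩ := hres.2 (Ideal.Quotient.mk _ s)
    obtain ⟨r, rfl⟩ := Ideal.Quotient.mk_surjective x
    rw [Ideal.quotientMap_mk] at hx
    have hmem : s - algebraMap R S r ∈
        (IsLocalRing.maximalIdeal R).map (algebraMap R S) :=
      Ideal.Quotient.eq.mp hx.symm
    have : s - algebraMap R S r ∈ (IsLocalRing.maximalIdeal R) • (⊤ : Submodule R S) := by
      rw [Ideal.smul_top_eq_map]; exact hmem
    have hs : s = algebraMap R S r + (s - algebraMap R S r) := by ring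
    rw [hs]
    exact Submodule.add_mem_sup ⟨r, rfl⟩ this
  have key := range_sup_pow_smul_top R S (IsLocalRing.maximalIdeal R) h1
  -- restriction map is injective
  set ρ : ((S ⊗[R] M) →ₗ[R] N) →ₗ[R] (M →ₗ[R] N) :=
    LinearMap.lcomp R N ((TensorProduct.mk R S M) 1) with hρ
  have hinj : Function.Injective ρ := by
    rw [injective_iff_map_eq_zero]
    intro f hf
    have hf1 : ∀ m : M, f ((1 : S) ⊗ₜ[R] m) = 0 := fun m => congrArg (fun g => g m) hf
    apply TensorProduct.ext'
    intro s m
    have hbot := Ideal.iInf_pow_smul_eq_bot_of_isLocalRing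
      (I := IsLocalRing.maximalIdeal R) (M := N)
      (Ideal.IsMaximal.ne_top (IsLocalRing.maximalIdeal.isMaximal R))
    have hmem : f (s ⊗ₜ[R] m) ∈
        (⨅ k : ℕ, (IsLocalRing.maximalIdeal R) ^ k • ⊤ : Submodule R N) := by
      rw [Submodule.mem_iInf]
      intro k
      have hs : s ∈ LinearMap.range (Algebra.linearMap R S) ⊔
          ((IsLocalRing.maximalIdeal R) ^ k • ⊤ : Submodule R S) := by
        rw [← key k]; trivial
      obtain ⟨x, ⟨r, rfl⟩, t, ht, rfl⟩ := Submodule.mem_sup.mp hs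
      have : (Algebra.linearMap R S r + t) ⊗ₜ[R] m = r • ((1:S) ⊗ₜ[R] m) + t ⊗ₜ[R] m := by
        rw [TensorProduct.add_tmul, TensorProduct.smul_tmul']
        simp [Algebra.smul_def]
      rw [this, map_add, map_smul, hf1, smul_zero, zero_add]
      refine Submodule.smul_induction_on ht ?_ ?_
      · intro a ha x _
        have : f ((a • x) ⊗ₜ[R] m) = a • f (x ⊗ₜ[R] m) := by
          rw [← TensorProduct.smul_tmul', map_smul]
        rw [this]
        exact Submodule.smul_mem_smul ha trivial
      · intro x y hx hy
        rw [TensorProduct.add_tmul, map_add]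
        exact Submodule.add_mem _ hx hy
    rw [hbot] at hmem
    simpa using hmem
  exact Module.Finite.of_injective ρ hinj
end
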